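/- Let G and G' be connected weighted graphs on the same vertex set {1,…,n}, n ≥ 2, with adjacency matrices A and A'. If r_G(u,v) = r_{G'}(u,v) for all pairs of vertices u, v, then A = A'. That is, a connected weighted graph is uniquely determined by its full set of pairwise effective resistances. -/

import Mathlib

open Matrix BigOperators Polynomial Filter Topology

/-- The four Penrose conditions characterizing the Moore–Penrose pseudoinverse. -/
def IsMoorePenrose {m k : Type*} [Fintype m] [Fintype k] (M : Matrix m k ℝ)
    (P : Matrix k m ℝ) : Prop :=
  M * P * M = M ∧ P * M * P = P ∧ (M * P)ᵀ = M * P ∧ (P * M)ᵀ = P * M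

/- The Moore–Penrose pseudoinverse `M⁺`: it always exists and is unique, so this
choice-based definition picks out exactly the Moore–Penrose pseudoinverse. -/
open Classical in
noncomputable def pinv {m k : Type*} [Fintype m] [Fintype k] (M : Matrix m k ℝ) :
    Matrix k m ℝ :=
  if h : ∃ P, IsMoorePenrose M P then h.choose else 0

/-- The Laplacian `L = D - A` of the weighted graph with adjacency matrix `A`. -/
noncomputable def lapl {n : ℕ} (A : Matrix (Fin n) (Fin n) ℝ) : Matrix (Fin n) (Fin n) ℝ :=
  Matrix.diagonal (fun u => ∑ v, A u v) - A

/-- Connectivity of the weighted graph with adjacency matrix `A`: the simple graph with an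
edge `{u,v}` whenever `A u v > 0` is connected. -/
def AdjConnected {n : ℕ} (A : Matrix (Fin n) (Fin n) ℝ) : Prop :=
  (SimpleGraph.fromRel fun u v => 0 < A u v).Connected

/-- The effective resistance `r_G(u,v) = χ_{u,v}ᵀ L⁺ χ_{u,v}` where `χ_{u,v} = e_u - e_v`. -/
noncomputable def effRes {n : ℕ} (A : Matrix (Fin n) (Fin n) ℝ) (u v : Fin n) : ℝ :=
  (Pi.single u 1 - Pi.single v 1) ⬝ᵥ (pinv (lapl A) *ᵥ (Pi.single u 1 - Pi.single v 1))

section Aux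

lemma mp_symm {m k : Type*} [Fintype m] [Fintype k] {M : Matrix m k ℝ} {P : Matrix k m ℝ}
    (h : IsMoorePenrose M P) : IsMoorePenrose P M :=
  ⟨h.2.1, h.1, h.2.2.2, h.2.2.1⟩

lemma mp_unique {m k : Type*} [Fintype m] [Fintype k] {M : Matrix m k ℝ}
    {P Q : Matrix k m ℝ} (hP : IsMoorePenrose M P) (hQ : IsMoorePenrose M Q) : P = Q := by
  obtain ⟨p1, p2, p3, p4⟩ := hP
  obtain ⟨q1, q2, q3, q4⟩ := hQ
  have hMt : Mᵀ = Mᵀ * Qᵀ * Mᵀ := by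
    conv_lhs => rw [← q1]
    rw [transpose_mul, transpose_mul, ← Matrix.mul_assoc]
  have hMP : M * P = M * Q := by
    calc M * P = Pᵀ * Mᵀ := by rw [← transpose_mul, p3]
    _ = Pᵀ * (Mᵀ * Qᵀ * Mᵀ) := by rw [← hMt]
    _ = (Pᵀ * Mᵀ) * (Qᵀ * Mᵀ) := by simp only [Matrix.mul_assoc]
    _ = (M * P)ᵀ * (M * Q)ᵀ := by rw [transpose_mul, transpose_mul]
    _ = (M * P) * (M * Q) := by rw [p3, q3]
    _ = (M * P * M) * Q := by simp only [Matrix.mul_assoc]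
    _ = M * Q := by rw [p1]
  have hPM : P * M = Q * M := by
    calc P * M = Mᵀ * Pᵀ := by rw [← transpose_mul, p4]
    _ = (Mᵀ * Qᵀ * Mᵀ) * Pᵀ := by rw [← hMt]
    _ = (Mᵀ * Qᵀ) * (Mᵀ * Pᵀ) := by simp only [Matrix.mul_assoc]
    _ = (Q * M)ᵀ * (P * M)ᵀ := by rw [transpose_mul, transpose_mul]
    _ = (Q * M) * (P * M) := by rw [p4, q4]
    _ = Q * (M * P * M) := by simp only [Matrix.mul_assoc]
    _ = Q * M := by rw [p1]
  calc P = P * M * P := p2.symm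
  _ = P * (M * Q) := by rw [Matrix.mul_assoc, hMP]
  _ = (Q * M) * Q := by rw [← Matrix.mul_assoc, hPM]
  _ = Q := q2

lemma pinv_spec {m k : Type*} [Fintype m] [Fintype k] {M : Matrix m k ℝ} {P : Matrix k m ℝ}
    (h : IsMoorePenrose M P) : pinv M = P := by
  have he : ∃ Q, IsMoorePenrose M Q := ⟨P, h⟩
  simp only [pinv, dif_pos he]
  exact mp_unique he.choose_spec h

end Aux
section Lap
variable {n : ℕ} (A : Matrix (Fin n) (Fin n) ℝ)

/-- The all-ones matrix. -/
def Jmat (n : ℕ) : Matrix (Fin n) (Fin n) ℝ := Matrix.of fun _ _ => 1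

lemma Jmat_transpose : (Jmat n)ᵀ = Jmat n := by ext; rfl

lemma Jmat_mul_Jmat : Jmat n * Jmat n = (n : ℝ) • Jmat n := by
  ext u v
  simp [Jmat, Matrix.mul_apply, Matrix.smul_apply]

lemma lapl_transpose (hsymm : A.IsSymm) : (lapl A)ᵀ = lapl A := by
  unfold lapl
  rw [transpose_sub, diagonal_transpose, hsymm]

lemma lapl_mul_Jmat : lapl A * Jmat n = 0 := by
  ext u v
  simp only [lapl, Jmat, Matrix.mul_apply, Matrix.sub_apply, Matrix.of_apply, mul_one,
    Matrix.zero_apply, Finset.sum_sub_distrib]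
  simp [Matrix.diagonal_apply, Finset.sum_ite_eq]

lemma Jmat_mul_lapl (hsymm : A.IsSymm) : Jmat n * lapl A = 0 := by
  have := congrArg Matrix.transpose (lapl_mul_Jmat A)
  rwa [transpose_mul, Jmat_transpose, lapl_transpose A hsymm, transpose_zero] at this

lemma quad_form (hsymm : A.IsSymm) (x : Fin n → ℝ) :
    2 * (x ⬝ᵥ (lapl A *ᵥ x)) = ∑ u, ∑ v, A u v * (x u - x v) ^ 2 := by
  have hsym : ∀ i j, A i j = A j i := fun i j => by
    conv_lhs => rw [← hsymm]
    rfl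
  have hS : ∑ u, ∑ v, A u v * x v ^ 2 = ∑ u, ∑ v, A u v * x u ^ 2 := by
    rw [Finset.sum_comm]
    exact Finset.sum_congr rfl fun u _ => Finset.sum_congr rfl fun v _ => by rw [hsym v u]
  have hmv : lapl A *ᵥ x = fun u => (∑ v, A u v) * x u - ∑ v, A u v * x v := by
    funext u
    simp [lapl, Matrix.mulVec, dotProduct, Matrix.sub_apply, Matrix.diagonal_apply,
      sub_mul, Finset.sum_sub_distrib, ite_mul, zero_mul, Finset.sum_ite_eq]
  have hL : x ⬝ᵥ (lapl A *ᵥ x) =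
      (∑ u, ∑ v, A u v * x u ^ 2) - ∑ u, ∑ v, A u v * (x u * x v) := by
    rw [hmv]
    simp only [dotProduct, ← Finset.sum_sub_distrib]
    refine Finset.sum_congr rfl fun u _ => ?_
    rw [Finset.sum_sub_distrib, mul_sub, Finset.sum_mul, Finset.mul_sum, Finset.mul_sum]
    congr 1
    · exact Finset.sum_congr rfl fun v _ => by ring
    · exact Finset.sum_congr rfl fun v _ => by ring
  rw [hL]
  have : ∑ u, ∑ v, A u v * (x u - x v) ^ 2
      = (∑ u, ∑ v, A u v * x u ^ 2) + (∑ u, ∑ v, A u v * x v ^ 2)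
        - 2 * ∑ u, ∑ v, A u v * (x u * x v) := by
    simp only [← Finset.sum_add_distrib, ← Finset.sum_sub_distrib, Finset.mul_sum]
    exact Finset.sum_congr rfl fun u _ => Finset.sum_congr rfl fun v _ => by ring
  rw [this, hS]
  ring

lemma quad_nonneg (hsymm : A.IsSymm) (hnonneg : ∀ u v, 0 ≤ A u v) (x : Fin n → ℝ) :
    0 ≤ x ⬝ᵥ (lapl A *ᵥ x) := by
  have h := quad_form A hsymm x
  have : 0 ≤ ∑ u, ∑ v, A u v * (x u - x v) ^ 2 :=
    Finset.sum_nonneg fun u _ => Finset.sum_nonneg fun v _ =>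
      mul_nonneg (hnonneg u v) (sq_nonneg _)
  linarith

lemma const_of_quad_zero (hsymm : A.IsSymm) (hnonneg : ∀ u v, 0 ≤ A u v)
    (hconn : AdjConnected A) (x : Fin n → ℝ) (hq : x ⬝ᵥ (lapl A *ᵥ x) = 0) :
    ∀ u v, x u = x v := by
  have hsum : ∑ u, ∑ v, A u v * (x u - x v) ^ 2 = 0 := by
    have := quad_form A hsymm x
    rw [hq] at this
    linarith
  have hterm : ∀ u v, A u v * (x u - x v) ^ 2 = 0 := by
    intro u v
    have houter := (Finset.sum_eq_zero_iff_of_nonneg fun u _ =>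
      Finset.sum_nonneg fun v _ => mul_nonneg (hnonneg u v) (sq_nonneg _)).1 hsum u
      (Finset.mem_univ u)
    exact (Finset.sum_eq_zero_iff_of_nonneg fun v _ =>
      mul_nonneg (hnonneg u v) (sq_nonneg _)).1 houter v (Finset.mem_univ v)
  have hadj : ∀ u v : Fin n, (SimpleGraph.fromRel fun a b => 0 < A a b).Adj u v → x u = x v := by
    intro u v huv
    rw [SimpleGraph.fromRel_adj] at huv
    rcases huv.2 with h | h
    · have := hterm u v
      have : (x u - x v) ^ 2 = 0 := by
        rcases mul_eq_zero.1 this with h' | h'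
        · exact absurd h' (ne_of_gt h)
        · exact h'
      have := pow_eq_zero_iff (n := 2) (by norm_num) |>.1 this
      linarith
    · have := hterm v u
      have : (x v - x u) ^ 2 = 0 := by
        rcases mul_eq_zero.1 this with h' | h'
        · exact absurd h' (ne_of_gt h)
        · exact h'
      have := pow_eq_zero_iff (n := 2) (by norm_num) |>.1 this
      linarith
  intro u v
  obtain ⟨p⟩ := hconn.preconnected u v
  induction p with
  | nil => rfl
  | cons ha _ ih => exact (hadj _ _ ha).trans ih

end Lap

section Exist
variable {n : ℕ}

lemma exists_pinv_lapl (hn : 0 < n) (A : Matrix (Fin n) (Fin n) ℝ)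
    (hsymm : A.IsSymm) (hnonneg : ∀ u v, 0 ≤ A u v) (hconn : AdjConnected A) :
    ∃ P : Matrix (Fin n) (Fin n) ℝ, IsMoorePenrose (lapl A) P ∧ Pᵀ = P ∧
      ∀ u, ∑ v, P u v = 0 := by
  set c : ℝ := (n : ℝ)⁻¹ with hc
  have hnR : (0 : ℝ) < n := by exact_mod_cast hn
  have hcpos : 0 < c := by positivity
  set L := lapl A with hLdef
  set J := Jmat n with hJdef
  set M := L + c • J with hMdef
  have hJJ : J * J = (n : ℝ) • J := Jmat_mul_Jmat
  have hLJ : L * J = 0 := lapl_mul_Jmat A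
  have hJL : J * L = 0 := Jmat_mul_lapl A hsymm
  have hLt : Lᵀ = L := lapl_transpose A hsymm
  have hJt : Jᵀ = J := Jmat_transpose
  have hMt : Mᵀ = M := by
    rw [hMdef, transpose_add, hLt, transpose_smul, hJt]
  -- c•J is idempotent and absorbed by M
  have hcJcJ : (c • J) * (c • J) = c • J := by
    rw [Matrix.smul_mul, Matrix.mul_smul, hJJ, smul_smul, smul_smul]
    congr 1
    have hn0 : (n : ℝ) ≠ 0 := hnR.ne'
    rw [hc]
    field_simp
  have hMcJ : M * (c • J) = c • J := by
    rw [hMdef, Matrix.add_mul, Matrix.mul_smul, hLJ, smul_zero, zero_add, hcJcJ]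
  have hcJM : (c • J) * M = c • J := by
    rw [hMdef, Matrix.mul_add, Matrix.smul_mul, hJL, smul_zero, zero_add, hcJcJ]
  -- invertibility of M
  have hdet : IsUnit M.det := by
    rw [isUnit_iff_ne_zero]
    intro hd
    obtain ⟨x, hx0, hx⟩ := (Matrix.exists_mulVec_eq_zero_iff).2 hd
    have hxq : x ⬝ᵥ (M *ᵥ x) = 0 := by rw [hx]; simp
    have hsplit : x ⬝ᵥ (M *ᵥ x) = x ⬝ᵥ (L *ᵥ x) + c * (∑ u, x u) ^ 2 := by
      rw [hMdef, Matrix.add_mulVec, dotProduct_add]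
      congr 1
      rw [Matrix.smul_mulVec, dotProduct_smul]
      have : J *ᵥ x = fun _ => ∑ u, x u := by
        funext u; simp [hJdef, Jmat, Matrix.mulVec, dotProduct]
      rw [this]
      have h9 : (x ⬝ᵥ fun _ => ∑ u, x u) = (∑ u, x u) * (∑ u, x u) := by
        simp [dotProduct, ← Finset.sum_mul]
      rw [h9, smul_eq_mul]
      ring
    have h1 : 0 ≤ x ⬝ᵥ (L *ᵥ x) := quad_nonneg A hsymm hnonneg x
    have h2 : 0 ≤ c * (∑ u, x u) ^ 2 := by positivity
    have hq0 : x ⬝ᵥ (L *ᵥ x) = 0 := by rw [hsplit] at hxq; linarith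
    have hs0 : (∑ u, x u) = 0 := by
      have : c * (∑ u, x u) ^ 2 = 0 := by rw [hsplit] at hxq; linarith
      have := (mul_eq_zero.1 this).resolve_left (ne_of_gt hcpos)
      exact pow_eq_zero_iff (n := 2) (by norm_num) |>.1 this
    have hconst := const_of_quad_zero A hsymm hnonneg hconn x hq0
    apply hx0
    funext u
    have hxx : ∑ v, x v = ∑ v : Fin n, x u := Finset.sum_congr rfl fun v _ => (hconst v u)
    rw [Finset.sum_const, Finset.card_univ, Fintype.card_fin, nsmul_eq_mul] at hxx
    have hxu : (n : ℝ) * x u = 0 := by rw [← hxx, hs0]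
    have := (mul_eq_zero.1 hxu).resolve_left hnR.ne'
    simpa using this
  have hMM : M * M⁻¹ = 1 := Matrix.mul_nonsing_inv M hdet
  have hMM' : M⁻¹ * M = 1 := Matrix.nonsing_inv_mul M hdet
  have hMicJ : M⁻¹ * (c • J) = c • J := by
    conv_lhs => rw [← hMcJ, ← Matrix.mul_assoc, hMM', Matrix.one_mul]
  have hcJMi : (c • J) * M⁻¹ = c • J := by
    conv_lhs => rw [← hcJM, Matrix.mul_assoc, hMM, Matrix.mul_one]
  set P := M⁻¹ - c • J with hPdef
  have hLM : L = M - c • J := by rw [hMdef]; abel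
  -- products
  have hLP : L * P = 1 - c • J := by
    rw [hLM, hPdef, Matrix.sub_mul, Matrix.mul_sub, Matrix.mul_sub, Matrix.smul_mul,
      hMM, hMcJ]
    rw [← Matrix.smul_mul]
    rw [hcJMi, hcJcJ]
    abel
  have hPL : P * L = 1 - c • J := by
    rw [hLM, hPdef, Matrix.mul_sub, Matrix.sub_mul, Matrix.sub_mul, hMM', hMicJ, hcJM, hcJcJ]
    abel
  have hPt : Pᵀ = P := by
    rw [hPdef, transpose_sub, transpose_smul, hJt, Matrix.transpose_nonsing_inv, hMt]
  refine ⟨P, ⟨?_, ?_, ?_, ?_⟩, hPt, ?_⟩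
  · rw [hLP, Matrix.sub_mul, Matrix.one_mul, Matrix.smul_mul, hJL, smul_zero, sub_zero]
  · have hcJP : (c • J) * P = 0 := by
      rw [hPdef, Matrix.mul_sub, hcJMi, hcJcJ, sub_self]
    rw [hPL, Matrix.sub_mul, Matrix.one_mul, hcJP, sub_zero]
  · rw [hLP, transpose_sub, transpose_one, transpose_smul, hJt]
  · rw [hPL, transpose_sub, transpose_one, transpose_smul, hJt]
  · intro u
    have hPJ : P * (c • J) = 0 := by
      rw [hPdef, Matrix.sub_mul, hMicJ, hcJcJ, sub_self]
    have := congrFun (congrFun hPJ u) u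
    simp only [Matrix.mul_apply, Matrix.smul_apply, hJdef, Jmat, Matrix.of_apply,
      smul_eq_mul, mul_one, Matrix.zero_apply, ← Finset.sum_mul] at this
    rcases mul_eq_zero.1 this with h | h
    · exact h
    · exact absurd h (ne_of_gt hcpos)
end Exist

section Recover
variable {n : ℕ}

lemma effRes_eq (A : Matrix (Fin n) (Fin n) ℝ) (u v : Fin n) :
    effRes A u v = pinv (lapl A) u u + pinv (lapl A) v v
      - pinv (lapl A) u v - pinv (lapl A) v u := by
  set Q := pinv (lapl A) with hQ
  unfold effRes
  rw [← hQ, Matrix.mulVec_sub, Matrix.mulVec_single_one, Matrix.mulVec_single_one,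
    sub_dotProduct, single_dotProduct, single_dotProduct]
  simp only [Pi.sub_apply, mul_one, one_mul, Matrix.col_apply]
  ring

lemma recover_matrix {P P' : Matrix (Fin n) (Fin n) ℝ} (hn : 0 < n)
    (hPt : Pᵀ = P) (hPt' : P'ᵀ = P')
    (h0 : ∀ u, ∑ v, P u v = 0) (h0' : ∀ u, ∑ v, P' u v = 0)
    (hr : ∀ u v, P u u + P v v - P u v - P v u = P' u u + P' v v - P' u v - P' v u) :
    P = P' := by
  have hnR : (0 : ℝ) < n := by exact_mod_cast hn
  have key : ∀ Q : Matrix (Fin n) (Fin n) ℝ, Qᵀ = Q → (∀ u, ∑ v, Q u v = 0) →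
      ∀ u, ∑ v, (Q u u + Q v v - Q u v - Q v u) = n * Q u u + ∑ w, Q w w := by
    intro Q hQt hQ0 u
    have hcol : ∑ v, Q v u = 0 := by
      have : ∀ v, Q v u = Q u v := fun v =>
        (congrFun (congrFun hQt v) u).symm.trans (Matrix.transpose_apply Q v u)
      rw [Finset.sum_congr rfl fun v _ => this v]
      exact hQ0 u
    rw [Finset.sum_sub_distrib, Finset.sum_sub_distrib, Finset.sum_add_distrib,
      hQ0 u, hcol, Finset.sum_const, Finset.card_univ, Fintype.card_fin, nsmul_eq_mul]
    ring
  have hsum : ∀ u, n * P u u + ∑ w, P w w = n * P' u u + ∑ w, P' w w := by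
    intro u
    rw [← key P hPt h0 u, ← key P' hPt' h0' u]
    exact Finset.sum_congr rfl fun v _ => hr u v
  have htr : ∑ w, P w w = ∑ w, P' w w := by
    have hdbl := Finset.sum_congr rfl fun u (_ : u ∈ Finset.univ) => hsum u
    rw [Finset.sum_add_distrib, Finset.sum_add_distrib, ← Finset.mul_sum, ← Finset.mul_sum,
      Finset.sum_const, Finset.sum_const, Finset.card_univ, Fintype.card_fin,
      nsmul_eq_mul, nsmul_eq_mul] at hdbl
    nlinarith [hdbl]
  have hdg : ∀ u, P u u = P' u u := by
    intro u
    have := hsum u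
    rw [htr] at this
    have h2 : n * P u u = n * P' u u := by linarith
    exact mul_left_cancel₀ hnR.ne' h2
  ext u v
  have h1 := hr u v
  have h2 : P u v = P v u :=
    (congrFun (congrFun hPt u) v).symm.trans (Matrix.transpose_apply P u v)
  have h3 : P' u v = P' v u :=
    (congrFun (congrFun hPt' u) v).symm.trans (Matrix.transpose_apply P' u v)
  have h4 := hdg u
  have h5 := hdg v
  linarith

end Recover


/-- A connected weighted graph on `n ≥ 2` vertices is uniquely determined
by its full set of pairwise effective resistances. -/
theorem stmt2 {n : ℕ} (hn : 2 ≤ n) (A A' : Matrix (Fin n) (Fin n) ℝ)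
    (hsymm : A.IsSymm) (hnonneg : ∀ u v, 0 ≤ A u v) (hdiag : ∀ u, A u u = 0)
    (hconn : AdjConnected A)
    (hsymm' : A'.IsSymm) (hnonneg' : ∀ u v, 0 ≤ A' u v) (hdiag' : ∀ u, A' u u = 0)
    (hconn' : AdjConnected A')
    (hres : ∀ u v, effRes A u v = effRes A' u v) :
    A = A' := by
  have hn0 : 0 < n := lt_of_lt_of_le (by norm_num) hn
  obtain ⟨P, hP, hPt, hP0⟩ := exists_pinv_lapl hn0 A hsymm hnonneg hconn
  obtain ⟨P', hP', hPt', hP0'⟩ := exists_pinv_lapl hn0 A' hsymm' hnonneg' hconn'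
  have e1 : pinv (lapl A) = P := pinv_spec hP
  have e2 : pinv (lapl A') = P' := pinv_spec hP'
  have hPP : P = P' := by
    refine recover_matrix hn0 hPt hPt' hP0 hP0' fun u v => ?_
    have h := hres u v
    rw [effRes_eq, effRes_eq, e1, e2] at h
    exact h
  have hL : lapl A = lapl A' := by
    have g1 : pinv P = lapl A := pinv_spec (mp_symm hP)
    have g2 : pinv P' = lapl A' := pinv_spec (mp_symm hP')
    rw [← g1, ← g2, hPP]
  ext u v
  by_cases huv : u = v
  · subst huv
    rw [hdiag, hdiag']
  · have h := congrFun (congrFun hL u) v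
    simp only [lapl, Matrix.sub_apply, Matrix.diagonal_apply_ne _ huv, zero_sub] at h
    linarith
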